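/- Let G be a finite group acting on a commutative ring R and let I ⊆ R be a finitely generated G-stable ideal. Then the radical of the ideal I^G · R (the ideal of R generated by I ∩ R^G) equals the radical of I. -/
import Mathlib


/-- If `G` is a finite group acting on a commutative ring `R` and `I ⊆ R` is a
finitely generated `G`-stable ideal, then the radical of the ideal `I^G · R`
(the ideal generated by `I ∩ R^G`) equals the radical of `I`. -/
theorem radical_span_fixed_eq_radical
    {G R : Type*} [Group G] [Fintype G] [CommRing R] [MulSemiringAction G R]
    (I : Ideal R) (hfg : I.FG) (hGI : ∀ (σ : G), ∀ x ∈ I, σ • x ∈ I) :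
    (Ideal.span {r : R | r ∈ I ∧ ∀ σ : G, σ • r = r}).radical = I.radical := by
  classical
  apply le_antisymm
  · exact Ideal.radical_mono (Ideal.span_le.mpr fun r hr => hr.1)
  · rw [Ideal.radical_le_radical_iff]
    intro x hx
    by_cases htop : I = ⊤
    · subst htop
      refine ⟨1, ?_⟩
      have h1 : (1:R) ∈ {r : R | r ∈ (⊤ : Ideal R) ∧ ∀ σ : G, σ • r = r} :=
        ⟨Submodule.mem_top, fun σ => smul_one σ⟩
      have h2 : Ideal.span {r : R | r ∈ (⊤ : Ideal R) ∧ ∀ σ : G, σ • r = r} = ⊤ :=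
        (Ideal.eq_top_iff_one _).mpr (Ideal.subset_span h1)
      rw [h2]
      exact Submodule.mem_top
    haveI : Nontrivial (R ⧸ I) := Ideal.Quotient.nontrivial_iff.mpr htop
    set P := prodXSubSMul G R x with hP
    have hmonic : P.Monic := prodXSubSMul.monic G R x
    set n := P.natDegree with hn
    -- P maps to X ^ n modulo I
    have hmap : P.map (Ideal.Quotient.mk I) =
        Polynomial.X ^ (Fintype.card (G ⧸ MulAction.stabilizer G x)) := by
      have hfac : ∀ q ∈ (Finset.univ : Finset (G ⧸ MulAction.stabilizer G x)),
          (Polynomial.X - Polynomial.C (MulAction.ofQuotientStabilizer G x q)).map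
            (Ideal.Quotient.mk I) = Polynomial.X := by
        intro q _
        rw [Polynomial.map_sub, Polynomial.map_X, Polynomial.map_C]
        have h0 : (Ideal.Quotient.mk I) (MulAction.ofQuotientStabilizer G x q) = 0 := by
          induction q using Quotient.inductionOn with
          | h g =>
            rw [MulAction.ofQuotientStabilizer_mk, Ideal.Quotient.eq_zero_iff_mem]
            exact hGI g x hx
        rw [h0, Polynomial.C_0, sub_zero]
      rw [hP, prodXSubSMul, Polynomial.map_prod, Finset.prod_congr rfl hfac,
        Finset.prod_const, Finset.card_univ]
    have hncard : n = Fintype.card (G ⧸ MulAction.stabilizer G x) := by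
      have h1 : (P.map (Ideal.Quotient.mk I)).natDegree = n :=
        hmonic.natDegree_map _
      rw [hmap, Polynomial.natDegree_X_pow] at h1
      exact h1.symm
    have hcoeff : ∀ k, k < n → P.coeff k ∈ I := by
      intro k hk
      have : (Ideal.Quotient.mk I) (P.coeff k) = 0 := by
        rw [← Polynomial.coeff_map, hmap, ← hncard, Polynomial.coeff_X_pow,
          if_neg hk.ne]
      exact Ideal.Quotient.eq_zero_iff_mem.mp this
    -- x ^ n belongs to the span
    have heval : P.eval x = 0 := prodXSubSMul.eval G R x
    have hsum : ∑ i ∈ Finset.range (n + 1), P.coeff i * x ^ i = 0 := by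
      rw [← Polynomial.eval_eq_sum_range, heval]
    rw [Finset.sum_range_succ, hmonic.coeff_natDegree, one_mul,
      add_eq_zero_iff_eq_neg] at hsum
    refine ⟨n, ?_⟩
    have hxn : x ^ n = -∑ i ∈ Finset.range n, P.coeff i * x ^ i := by
      rw [hsum, neg_neg]
    rw [hxn]
    exact neg_mem (Ideal.sum_mem _ fun i hi => Ideal.mul_mem_right _ _
      (Ideal.subset_span ⟨hcoeff i (Finset.mem_range.mp hi),
        fun σ => prodXSubSMul.coeff G R x σ i⟩))
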